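/- Let x_1, ..., x_n be real numbers and let G_1, ..., G_n be i.i.d. standard Gumbel random variables (with CDF F(x) = exp(-exp(-x))). Then for each index i, the probability that x_i + G_i = max_j (x_j + G_j) equals exp(x_i) / (sum_{j=1}^n exp(x_j)). (The Gumbel-Max Trick.) -/

import Mathlib

open MeasureTheory ProbabilityTheory Real

open MeasureTheory Real Set Filter Topology

lemma pi_fintype_congr {ι : Type*} {α : ι → Type*}
    [∀ i, MeasurableSpace (α i)] (F1 F2 : Fintype ι) (μ : ∀ i, Measure (α i)) :
    (letI := F1; Measure.pi μ) = (letI := F2; Measure.pi μ) := by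
  cases Subsingleton.elim F1 F2; rfl


/-- Antiderivative fact. -/
lemma gm_hasDerivAt (A : ℝ) (hA : 0 < A) (t : ℝ) :
    HasDerivAt (fun s => Real.exp (-A * Real.exp (-s)) / A)
      (Real.exp (-t) * Real.exp (-A * Real.exp (-t))) t := by
  have h1 : HasDerivAt (fun s : ℝ => -s) (-1) t := (hasDerivAt_id t).neg
  have h2 : HasDerivAt (fun s : ℝ => Real.exp (-s)) (Real.exp (-t) * -1) t := h1.exp
  have h3 : HasDerivAt (fun s : ℝ => -A * Real.exp (-s)) (-A * (Real.exp (-t) * -1)) t :=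
    h2.const_mul (-A)
  have h4 := (h3.exp).div_const A
  refine h4.congr_deriv ?_
  rw [div_eq_iff hA.ne']
  ring

lemma gm_tendsto_atBot (A : ℝ) (hA : 0 < A) :
    Tendsto (fun s => Real.exp (-A * Real.exp (-s)) / A) atBot (𝓝 0) := by
  have h1 : Tendsto (fun s : ℝ => -s) atBot atTop := tendsto_neg_atBot_atTop
  have h2 : Tendsto (fun s : ℝ => Real.exp (-s)) atBot atTop :=
    Real.tendsto_exp_atTop.comp h1
  have h3 : Tendsto (fun s : ℝ => -A * Real.exp (-s)) atBot atBot := by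
    exact h2.const_mul_atTop_of_neg (neg_neg_iff_pos.mpr hA)
  have h4 : Tendsto (fun s : ℝ => Real.exp (-A * Real.exp (-s))) atBot (𝓝 0) :=
    Real.tendsto_exp_atBot.comp h3
  simpa using h4.div_const A

lemma gm_tendsto_atTop (A : ℝ) (hA : 0 < A) :
    Tendsto (fun s => Real.exp (-A * Real.exp (-s)) / A) atTop (𝓝 (1 / A)) := by
  have h2 : Tendsto (fun s : ℝ => Real.exp (-s)) atTop (𝓝 0) := by
    exact Real.tendsto_exp_atBot.comp tendsto_neg_atTop_atBot
  have h3 : Tendsto (fun s : ℝ => -A * Real.exp (-s)) atTop (𝓝 0) := by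
    simpa using h2.const_mul (-A)
  have h4 : Tendsto (fun s : ℝ => Real.exp (-A * Real.exp (-s))) atTop (𝓝 1) := by
    simpa [Function.comp_def] using (Real.continuous_exp.tendsto 0).comp h3
  simpa using h4.div_const A

lemma gm_integrableOn_Iic (A : ℝ) (hA : 0 < A) (b : ℝ) :
    IntegrableOn (fun t => Real.exp (-t) * Real.exp (-A * Real.exp (-t))) (Iic b) := by
  have hc : Continuous fun t : ℝ => Real.exp (-t) * Real.exp (-A * Real.exp (-t)) := by
    fun_prop
  apply integrableOn_Iic_of_intervalIntegral_norm_tendsto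
    (Real.exp (-A * Real.exp (-b)) / A) b
    (fun i : ℝ => hc.integrableOn_Ioc) tendsto_id
  have key : ∀ i : ℝ, (∫ t in i..b, ‖Real.exp (-t) * Real.exp (-A * Real.exp (-t))‖) =
      Real.exp (-A * Real.exp (-b)) / A - Real.exp (-A * Real.exp (-i)) / A := by
    intro i
    rw [intervalIntegral.integral_congr (g := fun t => Real.exp (-t) * Real.exp (-A * Real.exp (-t)))
      (fun t _ => norm_of_nonneg (by positivity))]
    exact intervalIntegral.integral_eq_sub_of_hasDerivAt (fun t _ => gm_hasDerivAt A hA t)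
      (hc.intervalIntegrable _ _)
  simp only [key]
  simpa using ((gm_tendsto_atBot A hA).const_sub (Real.exp (-A * Real.exp (-b)) / A))

lemma gm_setIntegral_Iic (A : ℝ) (hA : 0 < A) (b : ℝ) :
    ∫ t in Iic b, Real.exp (-t) * Real.exp (-A * Real.exp (-t)) =
      Real.exp (-A * Real.exp (-b)) / A := by
  have := integral_Iic_of_hasDerivAt_of_tendsto'
    (fun t _ => gm_hasDerivAt A hA t) (gm_integrableOn_Iic A hA b) (gm_tendsto_atBot A hA)
  simpa using this

lemma gm_integrable (A : ℝ) (hA : 0 < A) :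
    Integrable (fun t => Real.exp (-t) * Real.exp (-A * Real.exp (-t))) := by
  rw [← integrableOn_univ, ← Set.Iic_union_Ioi (a := (0:ℝ)), integrableOn_union]
  refine ⟨gm_integrableOn_Iic A hA 0, ?_⟩
  exact integrableOn_Ioi_deriv_of_nonneg' (fun t _ => gm_hasDerivAt A hA t)
    (fun t _ => by positivity) (gm_tendsto_atTop A hA)

lemma gm_integral (A : ℝ) (hA : 0 < A) :
    ∫ t, Real.exp (-t) * Real.exp (-A * Real.exp (-t)) = 1 / A := by
  have := integral_of_hasDerivAt_of_tendsto (fun t => gm_hasDerivAt A hA t)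
    (gm_integrable A hA) (gm_tendsto_atBot A hA) (gm_tendsto_atTop A hA)
  simpa using this

lemma gm_lintegral_Iic (A : ℝ) (hA : 0 < A) (b : ℝ) :
    ∫⁻ t in Iic b, ENNReal.ofReal (Real.exp (-t) * Real.exp (-A * Real.exp (-t))) =
      ENNReal.ofReal (Real.exp (-A * Real.exp (-b)) / A) := by
  rw [← ofReal_integral_eq_lintegral_ofReal (gm_integrableOn_Iic A hA b)
    (ae_of_all _ fun t => by positivity), gm_setIntegral_Iic A hA b]

lemma gm_lintegral (A : ℝ) (hA : 0 < A) :
    ∫⁻ t, ENNReal.ofReal (Real.exp (-t) * Real.exp (-A * Real.exp (-t))) =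
      ENNReal.ofReal (1 / A) := by
  rw [← ofReal_integral_eq_lintegral_ofReal (gm_integrable A hA)
    (ae_of_all _ fun t => by positivity), gm_integral A hA]

/-- **The Gumbel-Max Trick.** If `G 1, ..., G n` are i.i.d. standard Gumbel random
variables (CDF `exp (-exp (-x))`), then the probability that index `i` attains the
maximum of `x j + G j` equals `exp (x i) / ∑ j, exp (x j)`. -/
theorem gumbel_max_trick {Ω : Type*} [MeasurableSpace Ω] (μ : Measure Ω)
    [IsProbabilityMeasure μ] {n : ℕ} (hn : 0 < n) (x : Fin n → ℝ) (G : Fin n → Ω → ℝ)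
    (hmeas : ∀ i, Measurable (G i))
    (hindep : iIndepFun G μ)
    (hcdf : ∀ i t, μ {ω | G i ω ≤ t} = ENNReal.ofReal (Real.exp (-Real.exp (-t))))
    (i : Fin n) :
    μ {ω | ∀ j, x j + G j ω ≤ x i + G i ω} =
      ENNReal.ofReal (Real.exp (x i) / ∑ j, Real.exp (x j)) := by
  classical
  set ν : Measure ℝ := volume.withDensity
      (fun t => ENNReal.ofReal (Real.exp (-t) * Real.exp (-Real.exp (-t)))) with hν
  have hdm : Measurable fun t : ℝ => ENNReal.ofReal (Real.exp (-t) * Real.exp (-Real.exp (-t))) := by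
    fun_prop
  have hνIic : ∀ b : ℝ, ν (Iic b) = ENNReal.ofReal (Real.exp (-Real.exp (-b))) := by
    intro b
    rw [hν, withDensity_apply _ measurableSet_Iic]
    have := gm_lintegral_Iic 1 one_pos b
    simpa [neg_one_mul] using this
  have hνuniv : ν Set.univ = 1 := by
    rw [hν, withDensity_apply _ MeasurableSet.univ, Measure.restrict_univ]
    have := gm_lintegral 1 one_pos
    simpa [neg_one_mul] using this
  haveI : IsProbabilityMeasure ν := ⟨hνuniv⟩
  have hmap : ∀ j, μ.map (G j) = ν := by
    intro j
    haveI : IsProbabilityMeasure (μ.map (G j)) :=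
      Measure.isProbabilityMeasure_map (hmeas j).aemeasurable
    refine Measure.ext_of_Iic (μ.map (G j)) ν fun a => ?_
    rw [Measure.map_apply (hmeas j) measurableSet_Iic, hνIic a]
    exact hcdf j a
  set Φ : Ω → (Fin n → ℝ) := fun ω j => G j ω with hΦ
  have hΦm : Measurable Φ := measurable_pi_lambda _ hmeas
  have hmapΦ : μ.map Φ = Measure.pi (fun _ : Fin n => ν) := by
    refine (Measure.pi_eq fun s hs => ?_).symm
    rw [Measure.map_apply hΦm (MeasurableSet.univ_pi hs)]
    have hpre : Φ ⁻¹' Set.pi Set.univ s = ⋂ j, G j ⁻¹' s j := by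
      ext ω; simp [Φ, Set.mem_pi]
    rw [hpre]
    have h := hindep.measure_inter_preimage_eq_mul Finset.univ (sets := s)
      (fun j _ => hs j)
    rw [show (⋂ j ∈ Finset.univ, G j ⁻¹' s j) = ⋂ j, G j ⁻¹' s j by simp] at h
    rw [h]
    refine Finset.prod_congr rfl fun j _ => ?_
    rw [← hmap j, Measure.map_apply (hmeas j) (hs j)]
  set S : Set (Fin n → ℝ) := {g | ∀ j, x j + g j ≤ x i + g i} with hS
  have hSm : MeasurableSet S := by
    have : S = ⋂ j, {g : Fin n → ℝ | x j + g j ≤ x i + g i} := by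
      ext g; simp [hS]
    rw [this]
    exact MeasurableSet.iInter fun j => measurableSet_le
      (measurable_const.add (measurable_pi_apply j))
      (measurable_const.add (measurable_pi_apply i))
  have hev : {ω | ∀ j, x j + G j ω ≤ x i + G i ω} = Φ ⁻¹' S := rfl
  rw [hev, ← Measure.map_apply hΦm hSm, hmapΦ]
  -- split coordinate i off
  set T : Set (({j : Fin n // j = i} → ℝ) × ({j : Fin n // ¬ j = i} → ℝ)) :=
    {q | ∀ j : {j : Fin n // ¬ j = i}, q.2 j ≤ q.1 ⟨i, rfl⟩ + (x i - x (j : Fin n))} with hT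
  have hTm : MeasurableSet T := by
    have : T = ⋂ j : {j : Fin n // ¬ j = i},
        {q : ({j : Fin n // j = i} → ℝ) × ({j : Fin n // ¬ j = i} → ℝ) |
          q.2 j ≤ q.1 ⟨i, rfl⟩ + (x i - x (j : Fin n))} := by
      ext q; simp [hT]
    rw [this]
    exact MeasurableSet.iInter fun j => measurableSet_le (by fun_prop) (by fun_prop)
  have hpres := measurePreserving_piEquivPiSubtypeProd (fun _ : Fin n => ν)
    (fun j : Fin n => j = i)
  have hSe : S = (MeasurableEquiv.piEquivPiSubtypeProd (fun _ : Fin n => ℝ)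
      (fun j : Fin n => j = i)) ⁻¹' T := by
    ext g
    simp only [hS, hT, Set.mem_setOf_eq, Set.mem_preimage,
      MeasurableEquiv.piEquivPiSubtypeProd, MeasurableEquiv.coe_mk,
      Equiv.piEquivPiSubtypeProd_apply]
    constructor
    · intro h j
      have := h (j : Fin n)
      linarith
    · intro h j
      by_cases hj : j = i
      · subst hj; linarith
      · have := h ⟨j, hj⟩
        simp only at this
        linarith
  rw [hSe, hpres.measure_preimage hTm.nullMeasurableSet]
  rw [Measure.prod_apply hTm]
  have hsec : ∀ a : {j : Fin n // j = i} → ℝ,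
      (Measure.pi fun _ : {j : Fin n // ¬ j = i} => ν) (Prod.mk a ⁻¹' T) =
      ∏ j : {j : Fin n // ¬ j = i}, ν (Iic (a ⟨i, rfl⟩ + (x i - x (j : Fin n)))) := by
    intro a
    have : Prod.mk a ⁻¹' T =
        Set.pi Set.univ (fun j : {j : Fin n // ¬ j = i} =>
          Iic (a ⟨i, rfl⟩ + (x i - x (j : Fin n)))) := by
      ext b; simp [hT, Set.mem_pi, Pi.le_def, Subtype.forall]
    rw [this, Measure.pi_pi]
  rw [lintegral_congr hsec]
  set S' : ℝ := ∑ j : {j : Fin n // ¬ j = i}, Real.exp (x (j : Fin n) - x i) with hS'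
  have hS'nonneg : 0 ≤ S' := Finset.sum_nonneg fun j _ => (Real.exp_pos _).le
  have hφval : ∀ t : ℝ, (∏ j : {j : Fin n // ¬ j = i}, ν (Iic (t + (x i - x (j : Fin n)))))
      = ENNReal.ofReal (Real.exp (-(S' * Real.exp (-t)))) := by
    intro t
    simp only [hνIic]
    rw [← ENNReal.ofReal_prod_of_nonneg (fun j _ => (Real.exp_pos _).le)]
    congr 1
    rw [← Real.exp_sum]
    congr 1
    rw [hS', Finset.sum_mul, ← Finset.sum_neg_distrib]
    refine Finset.sum_congr rfl fun j _ => ?_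
    congr 1
    rw [← Real.exp_add]
    congr 1
    ring
  rw [lintegral_congr fun a => hφval _]
  haveI : Unique {j : Fin n // j = i} := ⟨⟨⟨i, rfl⟩⟩, fun a => Subtype.ext a.2⟩
  have hpresU := measurePreserving_funUnique ν {j : Fin n // j = i}
  have hhm : Measurable fun t : ℝ => ENNReal.ofReal (Real.exp (-(S' * Real.exp (-t)))) := by
    fun_prop
  have hdef : (default : {j : Fin n // j = i}) = ⟨i, rfl⟩ := (Unique.eq_default (⟨i, rfl⟩ : {j : Fin n // j = i})).symm
  have happ : ∀ a : {j : Fin n // j = i} → ℝ,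
      (MeasurableEquiv.funUnique {j : Fin n // j = i} ℝ) a = a ⟨i, rfl⟩ := by
    intro a
    show a default = a ⟨i, rfl⟩
    rw [hdef]
  have hA : (0:ℝ) < 1 + S' := by linarith
  have hfinal : ∫⁻ t, ENNReal.ofReal (Real.exp (-(S' * Real.exp (-t)))) ∂ν
      = ENNReal.ofReal (Real.exp (x i) / ∑ j, Real.exp (x j)) := by
    rw [hν, lintegral_withDensity_eq_lintegral_mul _ hdm hhm]
    have hcomb : ∀ t : ℝ, ((fun t : ℝ => ENNReal.ofReal (Real.exp (-t) * Real.exp (-Real.exp (-t)))) *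
        fun t : ℝ => ENNReal.ofReal (Real.exp (-(S' * Real.exp (-t))))) t =
        ENNReal.ofReal (Real.exp (-t) * Real.exp (-(1 + S') * Real.exp (-t))) := by
      intro t
      simp only [Pi.mul_apply]
      rw [← ENNReal.ofReal_mul (by positivity)]
      congr 1
      rw [mul_assoc, ← Real.exp_add]
      congr 2
      ring
    rw [lintegral_congr hcomb, gm_lintegral (1 + S') hA]
    congr 1
    have h1 : S' = ∑ j ∈ Finset.univ.erase i, Real.exp (x j - x i) := by
      rw [hS']
      exact (Finset.sum_subtype (p := fun j : Fin n => ¬ j = i) (Finset.univ.erase i)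
        (by intro j; simp [Finset.mem_erase]) (fun j => Real.exp (x j - x i))).symm
    have h2 : (1 : ℝ) + S' = ∑ j, Real.exp (x j - x i) := by
      rw [h1, ← Finset.add_sum_erase Finset.univ (fun j => Real.exp (x j - x i))
        (Finset.mem_univ i), sub_self, Real.exp_zero]
    rw [h2]
    have h3 : ∑ j, Real.exp (x j - x i) = (∑ j, Real.exp (x j)) / Real.exp (x i) := by
      rw [Finset.sum_div]
      exact Finset.sum_congr rfl fun j _ => by rw [Real.exp_sub]
    rw [h3, one_div_div]
  refine Eq.trans ?_ hfinal
  rw [← hpresU.lintegral_comp hhm]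
  congr! 1
  · exact pi_fintype_congr _ _ _
  funext a
  rw [show (MeasurableEquiv.funUnique {j : Fin n // j = i} ℝ) a = a ⟨i, rfl⟩ from happ a]
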